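/- (Regularizing the energy.) Let n ≥ 2. Assume the N×d real matrix Φ satisfies the Restricted Isometry Condition with parameters (2n, ε), where 0 < ε ≤ 0.03. Let v ∈ ℝ^d be n-sparse and let I ⊆ {1,…,d} satisfy |supp(v) ∪ I| ≤ 2n. Set x = Φv, F = range(Φ_I), r = P_{F^⊥} x, v₀ = v|_{supp(v)∖I}, and u = Φ*r. Let J ⊆ {1,…,d} be a set of biggest coordinates of u, i.e. J ⊆ supp(u), |u(i)| ≥ |u(j)| for all i ∈ J and j ∉ J, and |J| = min(n, |supp(u)|). Let J₀ ⊆ J be a subset with comparable coordinates (|u(i)| ≤ 2|u(j)| for all i, j ∈ J₀) whose energy ‖u|_{J₀}‖₂ is maximal among all subsets of J with comparable coordinates. Then ‖u|_{J₀}‖₂ ≥ (0.32/√(log n)) ‖v₀‖₂. -/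

import Mathlib

open Finset

noncomputable section

/-- A vector `v ∈ ℝ^d` is `m`-sparse if its support has at most `m` elements. -/
def msparse {d : ℕ} (m : ℕ) (v : EuclideanSpace ℝ (Fin d)) : Prop :=
  (Finset.univ.filter fun i => v i ≠ 0).card ≤ m

/-- The Restricted Isometry Condition with parameters `(m, ε)`. -/
def RIC {N d : ℕ} (Φ : Matrix (Fin N) (Fin d) ℝ) (m : ℕ) (ε : ℝ) : Prop :=
  ∀ v : EuclideanSpace ℝ (Fin d), msparse m v →
    (1 - ε) * ‖v‖ ≤ ‖Matrix.toEuclideanLin Φ v‖ ∧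
    ‖Matrix.toEuclideanLin Φ v‖ ≤ (1 + ε) * ‖v‖

/-- The support of a vector, as a `Finset`. -/
def suppF {d : ℕ} (v : EuclideanSpace ℝ (Fin d)) : Finset (Fin d) :=
  Finset.univ.filter fun i => v i ≠ 0

/-- `restr S w = w|_S`: the vector equal to `w` on `S` and zero elsewhere. -/
def restr {d : ℕ} (S : Finset (Fin d)) (w : EuclideanSpace ℝ (Fin d)) :
    EuclideanSpace ℝ (Fin d) :=
  WithLp.toLp 2 (fun i => if i ∈ S then w i else 0)

/-- `colSpan Φ S = range(Φ_S)`: the span of the columns of `Φ` indexed by `S`. -/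
def colSpan {N d : ℕ} (Φ : Matrix (Fin N) (Fin d) ℝ) (S : Finset (Fin d)) :
    Submodule ℝ (EuclideanSpace ℝ (Fin N)) :=
  Submodule.span ℝ ((fun j => (WithLp.toLp 2 (fun i => Φ i j) : EuclideanSpace ℝ (Fin N))) '' (S : Set (Fin d)))

-- auxiliary lemmas

lemma norm_sq_eq' {d : ℕ} (w : EuclideanSpace ℝ (Fin d)) : ‖w‖ ^ 2 = ∑ i, w i ^ 2 := by
  rw [EuclideanSpace.norm_eq, Real.sq_sqrt (by positivity)]
  exact Finset.sum_congr rfl fun i _ => by rw [Real.norm_eq_abs, sq_abs]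

lemma norm_restr_sq {d : ℕ} (S : Finset (Fin d)) (w : EuclideanSpace ℝ (Fin d)) :
    ‖restr S w‖ ^ 2 = ∑ i ∈ S, (w i) ^ 2 := by
  rw [norm_sq_eq']
  rw [show (Finset.univ : Finset (Fin d)) = S ∪ Sᶜ by simp]
  rw [Finset.sum_union disjoint_compl_right]
  have h1 : ∀ i ∈ S, restr S w i ^ 2 = w i ^ 2 := fun i hi => by simp [restr, hi]
  have h2 : ∀ i ∈ Sᶜ, restr S w i ^ 2 = 0 := by
    intro i hi; simp only [Finset.mem_compl] at hi; simp [restr, hi]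
  rw [Finset.sum_congr rfl h1, Finset.sum_congr rfl h2]
  simp

lemma inner_euc {d : ℕ} (x y : EuclideanSpace ℝ (Fin d)) :
    inner ℝ x y = ∑ i, x i * y i := by
  simp [PiLp.inner_apply, RCLike.inner_apply, mul_comm]

lemma sq_le_of_norm {d : ℕ} (a b : EuclideanSpace ℝ (Fin d)) (h : ‖a‖ ^ 2 ≤ ‖b‖ ^ 2) :
    ‖a‖ ≤ ‖b‖ := by
  have := Real.sqrt_le_sqrt h
  rwa [Real.sqrt_sq (norm_nonneg _), Real.sqrt_sq (norm_nonneg _)] at this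

lemma transpose_adjoint {N d : ℕ} (Φ : Matrix (Fin N) (Fin d) ℝ)
    (r : EuclideanSpace ℝ (Fin N)) (w : EuclideanSpace ℝ (Fin d)) :
    inner ℝ (Matrix.toEuclideanLin Φ.transpose r) w = (inner ℝ r (Matrix.toEuclideanLin Φ w) : ℝ) := by
  have : Φ.transpose = Φ.conjTranspose := by
    ext i j; simp [Matrix.conjTranspose_apply]
  rw [this, Matrix.toEuclideanLin_conjTranspose_eq_adjoint, LinearMap.adjoint_inner_left]

lemma toEuc_single {N d : ℕ} (Φ : Matrix (Fin N) (Fin d) ℝ) (j : Fin d) :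
    Matrix.toEuclideanLin Φ (EuclideanSpace.single j 1)
      = (WithLp.toLp 2 (fun i => Φ i j) : EuclideanSpace ℝ (Fin N)) := by
  rw [Matrix.toEuclideanLin_apply]
  ext i
  show Matrix.mulVec Φ (WithLp.ofLp (EuclideanSpace.single j 1)) i = Φ i j
  have : WithLp.ofLp (EuclideanSpace.single j (1:ℝ)) = Pi.single j 1 := by
    funext k
    rw [EuclideanSpace.single_apply]
    by_cases h : k = j <;> simp [h, Pi.single_apply]
  rw [this, Matrix.mulVec_single]
  simp

lemma eq_sum_single {d : ℕ} (I : Finset (Fin d)) (w : EuclideanSpace ℝ (Fin d))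
    (hw : ∀ i ∉ I, w i = 0) :
    w = ∑ j ∈ I, w j • EuclideanSpace.single j (1:ℝ) := by
  ext i
  have h1 : (∑ j ∈ I, w j • EuclideanSpace.single j (1:ℝ)) i
      = ∑ j ∈ I, w j * (if i = j then 1 else 0) := by
    rw [WithLp.ofLp_sum, Finset.sum_apply]
    exact Finset.sum_congr rfl fun j _ => by simp [EuclideanSpace.single_apply]
  rw [h1]
  simp only [mul_ite, mul_one, mul_zero, Finset.sum_ite_eq]
  by_cases h : i ∈ I
  · simp [h]
  · simp [h, hw i h]

lemma mem_colSpan_of_supp {N d : ℕ} (Φ : Matrix (Fin N) (Fin d) ℝ) (I : Finset (Fin d))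
    (w : EuclideanSpace ℝ (Fin d)) (hw : ∀ i ∉ I, w i = 0) :
    Matrix.toEuclideanLin Φ w ∈ colSpan Φ I := by
  rw [eq_sum_single I w hw, map_sum]
  apply Submodule.sum_mem
  intro j hj
  rw [map_smul]
  exact Submodule.smul_mem _ _
    (Submodule.subset_span ⟨j, by simpa using hj, (toEuc_single Φ j).symm⟩)

lemma colSpan_preimage {N d : ℕ} (Φ : Matrix (Fin N) (Fin d) ℝ) (I : Finset (Fin d))
    (z : EuclideanSpace ℝ (Fin N)) (hz : z ∈ colSpan Φ I) :
    ∃ y : EuclideanSpace ℝ (Fin d), (∀ i ∉ I, y i = 0) ∧ Matrix.toEuclideanLin Φ y = z := by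
  let K : Submodule ℝ (EuclideanSpace ℝ (Fin d)) :=
    { carrier := {w | ∀ i ∉ I, w i = 0}
      add_mem' := fun ha hb i hi => by
        simp [ha i hi, hb i hi]
      zero_mem' := fun i _ => rfl
      smul_mem' := fun c w hw i hi => by
        simp [hw i hi] }
  have : colSpan Φ I ≤ Submodule.map (Matrix.toEuclideanLin Φ) K := by
    rw [colSpan, Submodule.span_le]
    rintro _ ⟨j, hj, rfl⟩
    refine ⟨EuclideanSpace.single j 1, fun i hi => ?_, toEuc_single Φ j⟩
    have : i ≠ j := fun e => hi (by rw [e]; simpa using hj)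
    simp [EuclideanSpace.single_apply, this]
  obtain ⟨y, hy, hy2⟩ := this hz
  exact ⟨y, hy, hy2⟩

section proj
variable {E : Type*} [NormedAddCommGroup E] [InnerProductSpace ℝ E] [FiniteDimensional ℝ E]

lemma proj_add_mem (K : Submodule ℝ E) (w f : E) (hf : f ∈ K) :
    (Submodule.orthogonalProjection Kᗮ (w + f) : E) = Submodule.orthogonalProjection Kᗮ w := by
  rw [map_add]
  have : Submodule.orthogonalProjection Kᗮ f = 0 := by
    rw [Submodule.orthogonalProjectionOnto_eq_zero_iff]
    exact K.le_orthogonal_orthogonal hf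
  rw [this]
  simp

lemma inner_proj_self (K : Submodule ℝ E) (q : E) :
    inner ℝ (Submodule.orthogonalProjection Kᗮ q : E) q = (‖(Submodule.orthogonalProjection Kᗮ q : E)‖ : ℝ) ^ 2 := by
  set p := (Submodule.orthogonalProjection Kᗮ q : E)
  calc inner ℝ p q = inner ℝ p p + (inner ℝ p (q - p) : ℝ) := by
        rw [← inner_add_right]; congr 1; abel
    _ = ‖p‖ ^ 2 := by
        rw [Submodule.inner_right_of_mem_orthogonal (Submodule.orthogonalProjection Kᗮ q).2
          (show q - p ∈ Kᗮᗮ from Submodule.sub_starProjection_mem_orthogonal (K := Kᗮ) q),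
          real_inner_self_eq_norm_sq]
        ring

lemma sub_proj_mem (K : Submodule ℝ E) (q : E) :
    q - (Submodule.orthogonalProjection Kᗮ q : E) ∈ K := by
  rw [Submodule.orthogonalProjectionOnto_orthogonal]
  simpa using (Submodule.orthogonalProjection K q).2

end proj

lemma sum_sq_le_of_big {d : ℕ} (u : Fin d → ℝ) (S J : Finset (Fin d))
    (hcard : S.card ≤ J.card)
    (hbig : ∀ i ∈ J, ∀ j ∉ J, |u j| ≤ |u i|) :
    ∑ i ∈ S, u i ^ 2 ≤ ∑ i ∈ J, u i ^ 2 := by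
  have hSsplit : ∑ i ∈ S, u i ^ 2 = ∑ i ∈ S ∩ J, u i ^ 2 + ∑ i ∈ S \ J, u i ^ 2 := by
    rw [← Finset.sum_inter_add_sum_sdiff]
  have hJsplit : ∑ i ∈ J, u i ^ 2 = ∑ i ∈ J ∩ S, u i ^ 2 + ∑ i ∈ J \ S, u i ^ 2 := by
    rw [← Finset.sum_inter_add_sum_sdiff]
  rw [hSsplit, hJsplit, Finset.inter_comm S J]
  gcongr ?_ + ?_
  · exact le_refl _
  have hc : (S \ J).card ≤ (J \ S).card := by
    have h1 := Finset.card_sdiff_add_card_inter S J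
    have h2 := Finset.card_sdiff_add_card_inter J S
    rw [Finset.inter_comm] at h2
    omega
  rcases Finset.eq_empty_or_nonempty (J \ S) with he | hne
  · have : (S \ J) = ∅ := Finset.card_eq_zero.mp (Nat.le_zero.mp (by simpa [he] using hc))
    simp [this, he]
  · obtain ⟨i₀, hi₀, hmin⟩ := Finset.exists_min_image (J \ S) (fun i => u i ^ 2) hne
    have hi₀J : i₀ ∈ J := (Finset.mem_sdiff.mp hi₀).1
    calc ∑ i ∈ S \ J, u i ^ 2 ≤ ∑ _i ∈ S \ J, u i₀ ^ 2 := by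
          apply Finset.sum_le_sum
          intro j hj
          have hjJ : j ∉ J := (Finset.mem_sdiff.mp hj).2
          have := hbig i₀ hi₀J j hjJ
          calc u j ^ 2 = |u j| ^ 2 := (sq_abs _).symm
            _ ≤ |u i₀| ^ 2 := by gcongr
            _ = u i₀ ^ 2 := sq_abs _
      _ = (S \ J).card • (u i₀ ^ 2) := by rw [Finset.sum_const]
      _ ≤ (J \ S).card • (u i₀ ^ 2) := nsmul_le_nsmul_left (by positivity) hc
      _ ≤ ∑ i ∈ J \ S, u i ^ 2 := Finset.card_nsmul_le_sum _ _ _ hmin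

lemma clog_le_aux (n : ℕ) (hn : 2 ≤ n) :
    ((Nat.clog 2 n + 1 : ℕ) : ℝ) * Real.log 2 ≤ Real.log n + 2 * Real.log 2 := by
  have h1 : Nat.clog 2 n ≤ Nat.log 2 n + 1 :=
    calc Nat.clog 2 n ≤ Nat.clog 2 (2 ^ (Nat.log 2 n + 1)) :=
          Nat.clog_mono_right 2 (le_of_lt (Nat.lt_pow_succ_log_self (by norm_num) n))
      _ = Nat.log 2 n + 1 := Nat.clog_pow 2 _ (by norm_num)
  have h2 : (Nat.log 2 n : ℝ) * Real.log 2 ≤ Real.log n := by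
    have hp : ((2:ℝ)) ^ (Nat.log 2 n) ≤ n := by
      exact_mod_cast Nat.pow_log_le_self 2 (by omega)
    have := Real.log_le_log (by positivity) hp
    rwa [Real.log_pow] at this
  have h3 : ((Nat.clog 2 n + 1 : ℕ) : ℝ) ≤ (Nat.log 2 n : ℝ) + 2 := by
    push_cast
    exact_mod_cast (by omega : (Nat.clog 2 n + 1 : ℕ) ≤ Nat.log 2 n + 2)
  have hl2 : (0:ℝ) < Real.log 2 := Real.log_pos one_lt_two
  nlinarith [mul_le_mul_of_nonneg_right h3 hl2.le]
lemma exists_good_class {d : ℕ} (n : ℕ) (hn : 2 ≤ n) (u : Fin d → ℝ) (J : Finset (Fin d))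
    (hJn : J.card ≤ n) :
    ∃ A ⊆ J, (∀ i ∈ A, ∀ j ∈ A, |u i| ≤ 2 * |u j|) ∧
      (7/8 : ℝ) * ∑ i ∈ J, u i ^ 2 ≤ ((Nat.clog 2 n + 1 : ℕ) : ℝ) * ∑ i ∈ A, u i ^ 2 := by
  set K : ℕ := Nat.clog 2 n + 1 with hK
  have hK1 : 1 ≤ K := Nat.le_add_left 1 _
  rcases Finset.eq_empty_or_nonempty J with hJe | hJne
  · exact ⟨∅, Finset.empty_subset _, by simp, by simp [hJe]⟩
  obtain ⟨i₀, hi₀, hmax⟩ := Finset.exists_max_image J (fun i => |u i|) hJne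
  set M := |u i₀| with hM
  have hM0 : 0 ≤ M := abs_nonneg _
  rcases eq_or_lt_of_le hM0 with hMz | hMpos
  · -- all u i = 0 on J
    refine ⟨∅, Finset.empty_subset _, by simp, ?_⟩
    have : ∑ i ∈ J, u i ^ 2 = 0 := Finset.sum_eq_zero fun i hi => by
      have := hmax i hi
      have : u i = 0 := abs_eq_zero.mp (le_antisymm (by rw [← hMz] at this; exact this) (abs_nonneg _))
      simp [this]
    simp [this]
  -- classes
  set A : ℕ → Finset (Fin d) := fun k => J.filter fun i => M / 2 ^ k < |u i| ∧ |u i| ≤ M / 2 ^ (k - 1) with hA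
  set B : Finset (Fin d) := J.filter fun i => |u i| ≤ M / 2 ^ K with hB
  -- cover
  have hcover : ∀ i ∈ J, i ∉ B → ∃ k ∈ Finset.Icc 1 K, i ∈ A k := by
    intro i hi hiB
    have hiK : M / 2 ^ K < |u i| := by
      by_contra h
      exact hiB (Finset.mem_filter.mpr ⟨hi, not_lt.mp h⟩)
    have hP : ∃ k, M / 2 ^ k < |u i| := ⟨K, hiK⟩
    set k := Nat.find hP with hk
    have hkspec : M / 2 ^ k < |u i| := Nat.find_spec hP
    have hkK : k ≤ K := Nat.find_le hiK
    have hk1 : 1 ≤ k := by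
      rcases Nat.eq_zero_or_pos k with h0 | h1
      · exfalso
        have := hkspec
        rw [h0] at this
        simp at this
        exact absurd this (not_lt.mpr (hmax i hi))
      · exact h1
    have hklt : ¬ (M / 2 ^ (k - 1) < |u i|) := Nat.find_min hP (by omega)
    exact ⟨k, Finset.mem_Icc.mpr ⟨hk1, hkK⟩, Finset.mem_filter.mpr ⟨hi, hkspec, not_lt.mp hklt⟩⟩
  -- disjointness
  have hdisjkey : ∀ k k' : ℕ, k < k' → Disjoint (A k) (A k') := by
    intro k k' hlt
    apply Finset.disjoint_left.mpr
    intro i hik hik'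
    obtain ⟨_, h1, _⟩ := Finset.mem_filter.mp hik
    obtain ⟨_, _, h2⟩ := Finset.mem_filter.mp hik'
    have hle : M / 2 ^ (k' - 1) ≤ M / 2 ^ k := by
      rcases eq_or_lt_of_le hM0 with hz | hp
      · rw [← hz]; simp
      apply div_le_div_of_nonneg_left hM0 (by positivity)
      exact pow_le_pow_right₀ one_le_two (by omega)
    linarith
  have hdisj : ((Finset.Icc 1 K : Finset ℕ) : Set ℕ).PairwiseDisjoint A := by
    intro k _ k' _ hne
    rcases lt_or_gt_of_ne hne with h | h
    · exact hdisjkey k k' h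
    · exact (hdisjkey k' k h).symm
  -- comparability in each class
  have hcompA : ∀ k, 1 ≤ k → ∀ i ∈ A k, ∀ j ∈ A k, |u i| ≤ 2 * |u j| := by
    intro k hk i hi j hj
    obtain ⟨_, _, h1⟩ := Finset.mem_filter.mp hi
    obtain ⟨_, h2, _⟩ := Finset.mem_filter.mp hj
    have h2pow : (2:ℝ) ^ k = 2 * 2 ^ (k - 1) := by
      rw [← pow_succ']
      congr 1
      omega
    have heq : M / 2 ^ (k - 1) = 2 * (M / 2 ^ k) := by
      rw [h2pow]
      field_simp
    linarith [h2]
  -- energy of B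
  have hEB : ∑ i ∈ B, u i ^ 2 ≤ (1/8 : ℝ) * ∑ i ∈ J, u i ^ 2 := by
    have hMone : M ^ 2 ≤ ∑ i ∈ J, u i ^ 2 := by
      calc M ^ 2 = u i₀ ^ 2 := by rw [hM, sq_abs]
        _ ≤ ∑ i ∈ J, u i ^ 2 :=
          Finset.single_le_sum (f := fun i => u i ^ 2) (fun i _ => sq_nonneg _) hi₀
    have h4K : (4 * n ^ 2 : ℝ) ≤ 4 ^ K := by
      have h2 : (n : ℝ) ≤ 2 ^ Nat.clog 2 n := by
        exact_mod_cast Nat.le_pow_clog one_lt_two n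
      have : ((4:ℝ)) ^ K = 4 * (2 ^ Nat.clog 2 n) ^ 2 := by
        rw [hK, pow_succ, show (4:ℝ) = 2^2 by norm_num, ← pow_mul, ← pow_mul]
        ring
      rw [this]
      have : (n:ℝ) ^ 2 ≤ ((2:ℝ) ^ Nat.clog 2 n) ^ 2 :=
        pow_le_pow_left₀ (by positivity) h2 2
      linarith
    have hBdec : ∑ i ∈ B, u i ^ 2 ≤ (B.card : ℝ) * (M / 2 ^ K) ^ 2 := by
      calc ∑ i ∈ B, u i ^ 2 ≤ ∑ i ∈ B, (M / 2 ^ K) ^ 2 := by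
            apply Finset.sum_le_sum
            intro i hi
            obtain ⟨_, h⟩ := Finset.mem_filter.mp hi
            calc u i ^ 2 = |u i| ^ 2 := (sq_abs _).symm
              _ ≤ (M / 2 ^ K) ^ 2 := pow_le_pow_left₀ (abs_nonneg _) h 2
        _ = (B.card : ℝ) * (M / 2 ^ K) ^ 2 := by rw [Finset.sum_const, nsmul_eq_mul]
    have hBn : (B.card : ℝ) ≤ n := by
      exact_mod_cast le_trans (Finset.card_le_card (Finset.filter_subset _ _)) hJn
    have h2K4K : ((2:ℝ) ^ K) ^ 2 = 4 ^ K := by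
      rw [← pow_mul, show (4:ℝ) = 2^2 by norm_num, ← pow_mul]
      ring_nf
    have hcalc : (B.card : ℝ) * (M / 2 ^ K) ^ 2 ≤ (1/8) * M ^ 2 := by
      rw [div_pow, h2K4K]
      have h4Kpos : (0:ℝ) < 4 ^ K := by positivity
      have hn2 : (2:ℝ) ≤ n := by exact_mod_cast hn
      have hkey : (B.card:ℝ) * M ^ 2 ≤ 1/8 * M^2 * 4^K := by
        calc (B.card:ℝ) * M ^2 ≤ (n:ℝ) * M ^2 := by gcongr
          _ ≤ 1/8 * M^2 * (4 * n^2) := by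
              nlinarith [sq_nonneg M, mul_nonneg (mul_nonneg (sub_nonneg.mpr hn2)
                (le_trans zero_le_two hn2)) (sq_nonneg M)]
          _ ≤ 1/8 * M^2 * 4^K := by
              have : (0:ℝ) ≤ 1/8 * M^2 := by positivity
              gcongr
      calc (B.card : ℝ) * (M ^ 2 / 4 ^ K) = (B.card:ℝ) * M ^ 2 / 4 ^ K := by ring
        _ ≤ 1/8 * M ^ 2 := by rw [div_le_iff₀ h4Kpos]; linarith
    calc ∑ i ∈ B, u i ^ 2 ≤ (B.card : ℝ) * (M / 2 ^ K) ^ 2 := hBdec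
      _ ≤ (1/8) * M ^ 2 := hcalc
      _ ≤ (1/8) * ∑ i ∈ J, u i ^ 2 := by linarith
  -- sum over classes
  have hclasses : (7/8 : ℝ) * ∑ i ∈ J, u i ^ 2 ≤ ∑ k ∈ Finset.Icc 1 K, ∑ i ∈ A k, u i ^ 2 := by
    have hsplit : ∑ i ∈ J, u i ^ 2 = ∑ i ∈ B, u i ^ 2 + ∑ i ∈ J \ B, u i ^ 2 := by
      have hfn : J.filter (fun i => ¬ (|u i| ≤ M / 2 ^ K)) = J \ B := Finset.filter_not _ _
      rw [← hfn, hB]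
      exact (Finset.sum_filter_add_sum_filter_not J _ _).symm
    have hsub : J \ B ⊆ (Finset.Icc 1 K).biUnion A := by
      intro i hi
      obtain ⟨hiJ, hiB⟩ := Finset.mem_sdiff.mp hi
      obtain ⟨k, hk, hik⟩ := hcover i hiJ hiB
      exact Finset.mem_biUnion.mpr ⟨k, hk, hik⟩
    have h1 : ∑ i ∈ J \ B, u i ^ 2 ≤ ∑ i ∈ (Finset.Icc 1 K).biUnion A, u i ^ 2 :=
      Finset.sum_le_sum_of_subset_of_nonneg hsub (fun i _ _ => sq_nonneg _)
    rw [Finset.sum_biUnion (hdisj)] at h1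
    linarith
  -- pick best class
  have hne : (Finset.Icc 1 K).Nonempty := ⟨1, Finset.mem_Icc.mpr ⟨le_refl 1, hK1⟩⟩
  have havg : ∃ k ∈ Finset.Icc 1 K, (7/8 : ℝ) * (∑ i ∈ J, u i ^ 2) / K ≤ ∑ i ∈ A k, u i ^ 2 := by
    apply Finset.exists_le_of_sum_le hne
    have hcard : (Finset.Icc 1 K).card = K := by simp
    rw [Finset.sum_const, hcard, nsmul_eq_mul]
    rw [mul_div_assoc]
    rw [mul_comm ((7:ℝ)/8) _]
    rw [← mul_assoc]
    rw [mul_div_cancel₀]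
    · linarith [hclasses]
    · exact_mod_cast (show (0:ℕ) < K by omega).ne'
  obtain ⟨k, hk, hAk⟩ := havg
  obtain ⟨hk1, hkK⟩ := Finset.mem_Icc.mp hk
  refine ⟨A k, Finset.filter_subset _ _, hcompA k hk1 , ?_⟩
  have hKpos : (0:ℝ) < K := by exact_mod_cast (by omega : 0 < K)
  rw [div_le_iff₀ hKpos] at hAk
  linarith [hAk]

set_option maxHeartbeats 1000000 in
/-- Regularizing the energy: in the setting of the ROMP iteration (RIC with parameters
`(2n, ε)`, `0 < ε ≤ 0.03`, `n ≥ 2`), if `J₀ ⊆ J` is a subset with comparable coordinates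
of maximal energy among all such subsets of `J`, then
`‖u|_{J₀}‖₂ ≥ (0.32/√(log n)) ‖v₀‖₂`. -/
theorem regularizing_the_energy {N d n : ℕ} (hn : 2 ≤ n) (Φ : Matrix (Fin N) (Fin d) ℝ)
    (ε : ℝ) (hε : 0 < ε) (hε' : ε ≤ 0.03) (hΦ : RIC Φ (2 * n) ε)
    (v : EuclideanSpace ℝ (Fin d)) (hv : msparse n v)
    (I : Finset (Fin d)) (hI : (suppF v ∪ I).card ≤ 2 * n)
    (x r : EuclideanSpace ℝ (Fin N)) (v₀ u : EuclideanSpace ℝ (Fin d))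
    (hx : x = Matrix.toEuclideanLin Φ v)
    (hr : r = (Submodule.orthogonalProjection (colSpan Φ I)ᗮ x : EuclideanSpace ℝ (Fin N)))
    (hv₀ : v₀ = restr (suppF v \ I) v)
    (hu : u = Matrix.toEuclideanLin Φ.transpose r)
    (J : Finset (Fin d)) (hJsupp : J ⊆ suppF u)
    (hJbig : ∀ i ∈ J, ∀ j ∉ J, |u j| ≤ |u i|)
    (hJcard : J.card = min n (suppF u).card)
    (J₀ : Finset (Fin d)) (hJ₀ : J₀ ⊆ J)
    (hcomp : ∀ i ∈ J₀, ∀ j ∈ J₀, |u i| ≤ 2 * |u j|)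
    (hmax : ∀ A ⊆ J, (∀ i ∈ A, ∀ j ∈ A, |u i| ≤ 2 * |u j|) →
      ‖restr A u‖ ≤ ‖restr J₀ u‖) :
    0.32 / Real.sqrt (Real.log n) * ‖v₀‖ ≤ ‖restr J₀ u‖ := by
  classical
  -- trivial case v₀ = 0
  by_cases hv0 : v₀ = 0
  · rw [hv0]
    simp only [norm_zero, mul_zero]
    exact norm_nonneg _
  have hv₀pos : 0 < ‖v₀‖ := norm_pos_iff.mpr hv0
  set S : Finset (Fin d) := suppF v \ I with hS
  have hSv₀ : ∀ i, i ∉ S → v₀ i = 0 := by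
    intro i hi
    rw [hv₀]
    simp [restr, hi]
  -- decomposition of v
  have hvdec : v = v₀ + restr I v := by
    ext i
    show v i = v₀ i + restr I v i
    rw [hv₀]
    by_cases hiI : i ∈ I
    · have : i ∉ S := by simp [hS, hiI]
      simp [restr, this, hiI]
    · by_cases hiv : v i ≠ 0
      · have : i ∈ S := by simp [hS, suppF, hiI, hiv]
        simp [restr, this, hiI]
      · push_neg at hiv
        simp [restr, hiI, hiv]
  -- r is a projection of Φ v₀
  have hrI : Matrix.toEuclideanLin Φ (restr I v) ∈ colSpan Φ I :=
    mem_colSpan_of_supp Φ I _ (fun i hi => by simp [restr, hi])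
  have hr' : r = (Submodule.orthogonalProjection (colSpan Φ I)ᗮ
      (Matrix.toEuclideanLin Φ v₀) : EuclideanSpace ℝ (Fin N)) := by
    rw [hr, hx, hvdec, map_add]
    exact proj_add_mem _ _ _ hrI
  -- inner product identity
  have hinner : (inner ℝ r (Matrix.toEuclideanLin Φ v₀) : ℝ) = ‖r‖ ^ 2 := by
    rw [hr']
    exact inner_proj_self _ _
  have huv : (inner ℝ u v₀ : ℝ) = ‖r‖ ^ 2 := by
    rw [hu, transpose_adjoint, hinner]
  -- Cauchy-Schwarz on the support
  have huvS : (inner ℝ u v₀ : ℝ) = (inner ℝ (restr S u) v₀ : ℝ) := by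
    rw [inner_euc, inner_euc]
    apply Finset.sum_congr rfl
    intro i _
    by_cases hi : i ∈ S
    · simp [restr, hi]
    · rw [hSv₀ i hi]
      ring
  have hCS : ‖r‖ ^ 2 ≤ ‖restr S u‖ * ‖v₀‖ := by
    rw [← huv, huvS]
    exact real_inner_le_norm _ _
  -- r = Φ (v₀ - y) with y supported on I
  obtain ⟨y, hyI, hyeq⟩ := colSpan_preimage Φ I
    (Matrix.toEuclideanLin Φ v₀ - r) (by rw [hr']; exact sub_proj_mem _ _)
  have hrfe : r = Matrix.toEuclideanLin Φ (v₀ - y) := by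
    rw [map_sub, hyeq]
    abel
  -- sparsity of v₀ - y
  have hsp : msparse (2 * n) (v₀ - y) := by
    unfold msparse
    refine le_trans (Finset.card_le_card ?_) hI
    intro i hi
    simp only [Finset.mem_filter, Finset.mem_univ, true_and] at hi
    by_contra hiu
    simp only [Finset.mem_union] at hiu
    push_neg at hiu
    obtain ⟨h1, h2⟩ := hiu
    have hvi : v₀ i = 0 := hSv₀ i (by simp [hS, h1])
    have hyi : y i = 0 := hyI i h2
    apply hi
    show v₀ i - y i = 0
    rw [hvi, hyi, sub_zero]
  -- lower bound for ‖r‖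
  have hRIC := (hΦ (v₀ - y) hsp).1
  rw [← hrfe] at hRIC
  have hvy : ‖v₀‖ ≤ ‖v₀ - y‖ := by
    have hrestr : restr S (v₀ - y) = v₀ := by
      ext i
      by_cases hi : i ∈ S
      · have hiI : i ∉ I := (Finset.mem_sdiff.mp hi).2
        show (if i ∈ S then v₀ i - y i else 0) = v₀ i
        rw [if_pos hi, hyI i hiI, sub_zero]
      · show (if i ∈ S then v₀ i - y i else 0) = v₀ i
        rw [if_neg hi, hSv₀ i hi]
    apply sq_le_of_norm
    calc ‖v₀‖ ^ 2 = ‖restr S (v₀ - y)‖ ^ 2 := by rw [hrestr]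
      _ = ∑ i ∈ S, ((v₀ - y) i) ^ 2 := norm_restr_sq _ _
      _ ≤ ∑ i, ((v₀ - y) i) ^ 2 :=
          Finset.sum_le_sum_of_subset_of_nonneg (Finset.subset_univ S)
            (fun i _ _ => sq_nonneg _)
      _ = ‖v₀ - y‖ ^ 2 := (norm_sq_eq' _).symm
  have hε97 : (0.97 : ℝ) ≤ 1 - ε := by linarith
  have hrlow : (0.97 : ℝ) * ‖v₀‖ ≤ ‖r‖ := by
    calc (0.97 : ℝ) * ‖v₀‖ ≤ (1 - ε) * ‖v₀ - y‖ := by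
          apply mul_le_mul hε97 hvy (norm_nonneg _) (by linarith)
      _ ≤ ‖r‖ := hRIC
  -- energy on the support S
  have hresS : (0.97 : ℝ)^2 * ‖v₀‖ ≤ ‖restr S u‖ := by
    have h1 : ((0.97:ℝ) * ‖v₀‖) ^ 2 ≤ ‖restr S u‖ * ‖v₀‖ := by
      calc ((0.97:ℝ) * ‖v₀‖) ^ 2 ≤ ‖r‖ ^ 2 := by
            apply pow_le_pow_left₀ (by positivity) hrlow
        _ ≤ ‖restr S u‖ * ‖v₀‖ := hCS
    have h2 : ((0.97:ℝ) * ‖v₀‖) ^ 2 = (0.97:ℝ)^2 * ‖v₀‖ * ‖v₀‖ := by ring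
    rw [h2] at h1
    exact le_of_mul_le_mul_right h1 hv₀pos
  -- energy of the top-n set J dominates energy on S
  have hScard : S.card ≤ n := le_trans (Finset.card_le_card (Finset.sdiff_subset)) hv
  have hSJ : ∑ i ∈ S, u i ^ 2 ≤ ∑ i ∈ J, u i ^ 2 := by
    by_cases hc : (suppF u).card ≤ n
    · have hJeq : J = suppF u :=
        Finset.eq_of_subset_of_card_le hJsupp
          (le_of_eq (by rw [hJcard]; exact (min_eq_right hc).symm))
      rw [hJeq]
      have huniv : ∑ i ∈ suppF u, u i ^ 2 = ∑ i, u i ^ 2 := by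
        apply Finset.sum_subset (Finset.subset_univ _)
        intro i _ hi
        have : u i = 0 := by
          by_contra h
          exact hi (by simp [suppF, h])
        simp [this]
      rw [huniv]
      exact Finset.sum_le_sum_of_subset_of_nonneg (Finset.subset_univ S)
        (fun i _ _ => sq_nonneg _)
    · have hJn : J.card = n := by rw [hJcard]; exact min_eq_left (by omega)
      exact sum_sq_le_of_big u S J (by omega) hJbig
  -- the good class
  have hJlen : J.card ≤ n := by rw [hJcard]; exact min_le_left _ _
  obtain ⟨A, hAJ, hAcomp, hAenergy⟩ := exists_good_class n hn u J hJlen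
  set K : ℕ := Nat.clog 2 n + 1 with hK
  have hAle : ‖restr A u‖ ≤ ‖restr J₀ u‖ := hmax A hAJ hAcomp
  have hAsq : ∑ i ∈ A, u i ^ 2 ≤ ‖restr J₀ u‖ ^ 2 := by
    rw [← norm_restr_sq]
    exact pow_le_pow_left₀ (norm_nonneg _) hAle 2
  have hKpos : (0:ℝ) < K := by
    have : 0 < K := Nat.succ_pos _
    exact_mod_cast this
  -- chain of inequalities
  have hchain : (7/8 : ℝ) * ((0.97:ℝ)^4 * ‖v₀‖^2) ≤ (K:ℝ) * ‖restr J₀ u‖ ^ 2 := by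
    have e1 : ((0.97:ℝ)^2 * ‖v₀‖) ^ 2 ≤ ∑ i ∈ S, u i ^ 2 := by
      rw [← norm_restr_sq]
      exact pow_le_pow_left₀ (by positivity) hresS 2
    have e2 : (7/8 : ℝ) * ∑ i ∈ J, u i ^ 2 ≤ (K:ℝ) * ∑ i ∈ A, u i ^ 2 := hAenergy
    have e3 : (K:ℝ) * ∑ i ∈ A, u i ^ 2 ≤ (K:ℝ) * ‖restr J₀ u‖ ^ 2 := by
      apply mul_le_mul_of_nonneg_left hAsq hKpos.le
    have e1' : (0.97:ℝ)^4 * ‖v₀‖^2 ≤ ∑ i ∈ S, u i ^ 2 := by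
      calc (0.97:ℝ)^4 * ‖v₀‖^2 = ((0.97:ℝ)^2 * ‖v₀‖) ^ 2 := by ring
        _ ≤ ∑ i ∈ S, u i ^ 2 := e1
    linarith [e1', e2, e3, hSJ]
  -- numeric bound on K
  have hLog : Real.log 2 ≤ Real.log n :=
    Real.log_le_log (by norm_num) (by exact_mod_cast hn)
  have hlog2a : (0.6931471803 : ℝ) < Real.log 2 := Real.log_two_gt_d9
  have hLpos : (0:ℝ) < Real.log n := lt_of_lt_of_le (by linarith) hLog
  have hKlog : (K:ℝ) * Real.log 2 ≤ Real.log n + 2 * Real.log 2 := clog_le_aux n hn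
  have hnum : (0.1024 : ℝ) * K ≤ (7/8 * 0.97^4) * Real.log n := by
    have hKub : (0.6931471803 : ℝ) * K ≤ Real.log n + 2 * Real.log 2 := by
      nlinarith [mul_le_mul_of_nonneg_left hlog2a.le (hKpos.le)]
    have hl2ub : Real.log 2 < 0.6931471808 := Real.log_two_lt_d9
    nlinarith [hLog, hlog2a, hl2ub, hKub]
  -- conclude
  have hsq : (0.32 / Real.sqrt (Real.log n) * ‖v₀‖) ^ 2 ≤ ‖restr J₀ u‖ ^ 2 := by
    have h0 : (0.32 / Real.sqrt (Real.log n) * ‖v₀‖) ^ 2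
        = 0.1024 / Real.log n * ‖v₀‖ ^ 2 := by
      rw [mul_pow, div_pow, Real.sq_sqrt hLpos.le]
      norm_num
    rw [h0, div_mul_eq_mul_div, div_le_iff₀ hLpos]
    nlinarith [hchain, hnum, hKpos, hLpos, sq_nonneg ‖v₀‖,
      mul_le_mul_of_nonneg_right hnum (sq_nonneg ‖v₀‖),
      mul_le_mul_of_nonneg_right hchain hLpos.le]
  have hfin := Real.sqrt_le_sqrt hsq
  rwa [Real.sqrt_sq (by positivity), Real.sqrt_sq (norm_nonneg _)] at hfin
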